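/- Let X be a representation of the linearly oriented quiver A_n which admits a surjective morphism onto E^{kl}, and suppose X is expressed as a direct sum of interval representations. Then among the summands there is some E^{kj} with j ≥ l (i.e., a summand whose support begins at vertex k and extends at least to vertex l). -/

import Mathlib

open Classical

/-- A representation of a quiver (given by vertex type `ι`, arrow type `E`,
and source/target maps `s t : E → ι`) over a field `K`: a finite-dimensional
`K`-vector space at each vertex and a linear map along each arrow. -/
structure QRep (K : Type) [Field K] {ι : Type} {E : Type} (s t : E → ι) : Type 1 where
  V : ι → Type
  [addV : ∀ i, AddCommGroup (V i)]
  [modV : ∀ i, Module K (V i)]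
  [fdV : ∀ i, FiniteDimensional K (V i)]
  f : ∀ e : E, V (s e) →ₗ[K] V (t e)

attribute [instance] QRep.addV QRep.modV QRep.fdV

namespace QRep

variable {K : Type} [Field K] {ι E : Type} {s t : E → ι}

/-- A morphism of representations: linear maps at each vertex commuting with the arrow maps. -/
structure Hom (X Y : QRep K s t) : Type where
  φ : ∀ i, X.V i →ₗ[K] Y.V i
  comm : ∀ e, (Y.f e).comp (φ (s e)) = (φ (t e)).comp (X.f e)

def Hom.Surjective {X Y : QRep K s t} (f : Hom X Y) : Prop := ∀ i, Function.Surjective (f.φ i)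

def Hom.Injective {X Y : QRep K s t} (f : Hom X Y) : Prop := ∀ i, Function.Injective (f.φ i)

/-- Two representations are isomorphic if there is a morphism bijective at every vertex. -/
def Iso (X Y : QRep K s t) : Prop := ∃ f : Hom X Y, ∀ i, Function.Bijective (f.φ i)

/-- Direct sum of two representations, taken vertexwise. -/
def dsum (X Y : QRep K s t) : QRep K s t where
  V i := X.V i × Y.V i
  f e := (X.f e).prodMap (Y.f e)

instance : Module.Finite K PUnit :=
  Module.Finite.of_surjective (0 : K →ₗ[K] PUnit) (fun x => ⟨0, Subsingleton.elim _ _⟩)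

/-- The zero representation. -/
def zero : QRep K s t where
  V _ := PUnit
  f _ := 0

/-- A representation is zero if all its vector spaces are zero. -/
def IsZero (X : QRep K s t) : Prop := ∀ i, ∀ x : X.V i, x = 0

/-- Indecomposable: nonzero, and not isomorphic to a direct sum of two nonzero representations. -/
def Indec (X : QRep K s t) : Prop :=
  ¬ X.IsZero ∧ ∀ A B : QRep K s t, Iso X (A.dsum B) → A.IsZero ∨ B.IsZero

/-- Direct sum of a finite list of representations. -/
noncomputable def dsumList : List (QRep K s t) → QRep K s t
  | [] => zero
  | X :: L => X.dsum (dsumList L)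

/-- An extension `Y` of `Z` by `X`: an injective morphism `X → Y` and a surjective
morphism `Y → Z` whose vertexwise kernel is the image of `X`. -/
structure Extension (X Y Z : QRep K s t) : Type where
  incl : Hom X Y
  proj : Hom Y Z
  inj : ∀ i, Function.Injective (incl.φ i)
  surj : ∀ i, Function.Surjective (proj.φ i)
  exact : ∀ i, LinearMap.ker (proj.φ i) = LinearMap.range (incl.φ i)

/-- An extension is trivial (split) if there is a morphism `Y → X` restricting to the identity on `X`. -/
def Extension.Trivial {X Y Z : QRep K s t} (E : Extension X Y Z) : Prop :=
  ∃ r : Hom Y X, ∀ i x, r.φ i (E.incl.φ i x) = x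

/-- A subrepresentation of `Y`: a subspace at each vertex, stable under the arrow maps. -/
structure Sub (Y : QRep K s t) : Type where
  p : ∀ i, Submodule K (Y.V i)
  stable : ∀ e, ∀ x ∈ p (s e), Y.f e x ∈ p (t e)

def Sub.toRep {Y : QRep K s t} (S : Sub Y) : QRep K s t where
  V i := S.p i
  f e := (Y.f e).restrict (S.stable e)

/-- The quotient representation `Y/X`. -/
def Sub.quot {Y : QRep K s t} (S : Sub Y) : QRep K s t where
  V i := Y.V i ⧸ S.p i
  f e := Submodule.mapQ (S.p (s e)) (S.p (t e)) (Y.f e) (fun x hx => S.stable e x hx)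

/-- The inclusion morphism of a subrepresentation. -/
def Sub.incl {Y : QRep K s t} (S : Sub Y) : Hom S.toRep Y where
  φ i := (S.p i).subtype
  comm e := by ext x; rfl

/-- The quotient morphism onto the quotient representation. -/
def Sub.mkQ {Y : QRep K s t} (S : Sub Y) : Hom Y S.quot where
  φ i := (S.p i).mkQ
  comm e := by ext x; first | rfl | simp [Sub.quot, Submodule.mapQ_apply] | exact Submodule.mapQ_apply _ _ _

/-- The space of morphisms between two representations, as a subspace of the product of Hom spaces. -/
def HomSpace (X Y : QRep K s t) : Submodule K (∀ i, X.V i →ₗ[K] Y.V i) where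
  carrier := {φ | ∀ e, (Y.f e).comp (φ (s e)) = (φ (t e)).comp (X.f e)}
  add_mem' := by
    intro a b ha hb e
    simp only [Set.mem_setOf_eq] at ha hb
    simp [LinearMap.comp_add, LinearMap.add_comp, ha e, hb e]
  zero_mem' := by intro e; simp
  smul_mem' := by
    intro c a ha e
    simp only [Set.mem_setOf_eq] at ha
    simp [LinearMap.comp_smul, LinearMap.smul_comp, ha e]

end QRep
/-- The source of the `e`-th arrow of the linearly oriented quiver `Aₙ`
(vertices `0,…,n-1`, arrows `e → e+1` for `0 ≤ e < n-1`; 0-based indexing). -/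
def ASrc (n : ℕ) (e : Fin (n - 1)) : Fin n := ⟨e.val, by have := e.isLt; omega⟩

/-- The target of the `e`-th arrow of `Aₙ`. -/
def ATgt (n : ℕ) (e : Fin (n - 1)) : Fin n := ⟨e.val + 1, by have := e.isLt; omega⟩

/-- Representations of the linearly oriented quiver `Aₙ`. -/
abbrev ARep (K : Type) [Field K] (n : ℕ) := QRep K (ASrc n) (ATgt n)

/-- The canonical map from `M` to a submodule `T`: the identity if `T = ⊤`, zero otherwise. -/
noncomputable def toSub {K M : Type} [Field K] [AddCommGroup M] [Module K M]
    (T : Submodule K M) : M →ₗ[K] T :=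
  if h : T = ⊤ then LinearMap.codRestrict T LinearMap.id (fun x => by simp [h]) else 0

/-- The vertex spaces of the interval representation `E^{ij}`: `K` for `i ≤ p ≤ j`, zero otherwise. -/
def ESub (K : Type) [Field K] (n i j : ℕ) (p : Fin n) : Submodule K K :=
  if i ≤ p.val ∧ p.val ≤ j then ⊤ else ⊥

/-- The interval representation `E^{ij}` of `Aₙ` (0-based): one-dimensional spaces at
vertices `i,…,j`, identity maps between consecutive ones, zero elsewhere. -/
noncomputable def Eij (K : Type) [Field K] (n i j : ℕ) : ARep K n where
  V p := ESub K n i j p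
  f e := (toSub (ESub K n i j (ATgt n e))).comp (ESub K n i j (ASrc n e)).subtype

/-- Direct sum of interval representations indexed by a list of pairs. -/
noncomputable def intervalSum (K : Type) [Field K] (n : ℕ) (L : List (ℕ × ℕ)) : ARep K n :=
  QRep.dsumList (L.map fun pr => Eij K n pr.1 pr.2)


section AuxStmt8

variable {K : Type} [Field K]

lemma toSub_eq_zero {M : Type} [AddCommGroup M] [Module K M] {T : Submodule K M}
    (h : T ≠ ⊤) : toSub (K := K) T = 0 := dif_neg h

lemma toSub_coe {M : Type} [AddCommGroup M] [Module K M] {T : Submodule K M}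
    (h : T = ⊤) (x : M) : ((toSub (K := K) T x : T) : M) = x := by
  simp [toSub, h]

lemma sub_eq_zero_of_bot {M : Type} [AddCommGroup M] [Module K M] {T : Submodule K M}
    (h : T = ⊥) (x : T) : x = 0 := by
  subst h
  exact Subtype.ext ((Submodule.mem_bot K).mp x.2)

lemma bot_ne_top' : (⊥ : Submodule K K) ≠ ⊤ := by
  intro h
  have h1 : (1 : K) ∈ (⊥ : Submodule K K) := by rw [h]; trivial
  exact one_ne_zero ((Submodule.mem_bot K).mp h1)

lemma ESub_top {n i j : ℕ} {p : Fin n} (h1 : i ≤ p.val) (h2 : p.val ≤ j) :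
    ESub K n i j p = ⊤ := if_pos ⟨h1, h2⟩

lemma ESub_bot {n i j : ℕ} {p : Fin n} (h : ¬(i ≤ p.val ∧ p.val ≤ j)) :
    ESub K n i j p = ⊥ := if_neg h

namespace QRep

variable {ι E : Type} {s t : E → ι}

/-- Composition of representation morphisms. -/
def Hom.comp' {X Y Z : QRep K s t} (g : Hom Y Z) (f : Hom X Y) : Hom X Z where
  φ i := (g.φ i).comp (f.φ i)
  comm e := by
    rw [← LinearMap.comp_assoc, g.comm e, LinearMap.comp_assoc, f.comm e,
      LinearMap.comp_assoc]

/-- Inclusion of the first summand. -/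
def inlHom (A B : QRep K s t) : Hom A (A.dsum B) where
  φ i := LinearMap.inl K (A.V i) (B.V i)
  comm e := by
    apply LinearMap.ext
    intro x
    show ((A.f e).prodMap (B.f e)) (x, 0) = (A.f e x, 0)
    simp

/-- Inclusion of the second summand. -/
def inrHom (A B : QRep K s t) : Hom B (A.dsum B) where
  φ i := LinearMap.inr K (A.V i) (B.V i)
  comm e := by
    apply LinearMap.ext
    intro x
    show ((A.f e).prodMap (B.f e)) (0, x) = (0, B.f e x)
    simp

end QRep

/-- Injectivity of the edge maps of `Eij` when the target space is full. -/
lemma Eij_f_eq_zero {n i j : ℕ} (e : Fin (n - 1)) (h : ESub K n i j (ATgt n e) = ⊤)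
    (x : (Eij K n i j).V (ASrc n e)) (hx : (Eij K n i j).f e x = 0) : x = 0 := by
  have hx' : toSub (ESub K n i j (ATgt n e)) ((ESub K n i j (ASrc n e)).subtype x)
      = (0 : ESub K n i j (ATgt n e)) := hx
  have hval := congrArg Subtype.val hx'
  rw [toSub_coe h] at hval
  exact Subtype.ext (by simp at hval; rw [hval]; rfl)

/-- Surjectivity of the edge maps of `Eij` when both spaces are full. -/
lemma Eij_f_surj {n i j : ℕ} (e : Fin (n - 1)) (hS : ESub K n i j (ASrc n e) = ⊤)
    (hT : ESub K n i j (ATgt n e) = ⊤) :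
    Function.Surjective ((Eij K n i j).f e) := by
  intro x
  refine ⟨⟨(x : ESub K n i j (ATgt n e)).1, by rw [hS]; trivial⟩, ?_⟩
  show toSub (ESub K n i j (ATgt n e)) _ = _
  apply Subtype.ext
  rw [toSub_coe hT]
  rfl

/-- If the composite with the incoming edge map vanishes, the component at `p` vanishes. -/
lemma stmt8_step {n k l i j : ℕ} (p : ℕ) (hp : p < n - 1) (hkp : k ≤ p) (hpl : p + 1 ≤ l)
    (g : QRep.Hom (Eij K n i j) (Eij K n k l))
    (hz : ((Eij K n k l).f ⟨p, hp⟩).comp (g.φ (ASrc n ⟨p, hp⟩)) = 0) :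
    g.φ (⟨p, by omega⟩ : Fin n) = 0 := by
  apply LinearMap.ext
  intro x
  have hx : (Eij K n k l).f ⟨p, hp⟩ (g.φ (ASrc n ⟨p, hp⟩) x) = 0 :=
    LinearMap.ext_iff.mp hz x
  have htop : ESub K n k l (ATgt n (⟨p, hp⟩ : Fin (n - 1))) = ⊤ :=
    ESub_top (show k ≤ p + 1 by omega) (show p + 1 ≤ l by omega)
  have := Eij_f_eq_zero (⟨p, hp⟩ : Fin (n - 1)) htop _ hx
  exact this

/-- Key lemma: for any morphism `E^{ij} → E^{kl}`, if it is not the case that `i = k`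
and `l ≤ j`, then the component at vertex `k` is zero. -/
lemma stmt8_key {n k l i j : ℕ} (hkl : k ≤ l) (hl : l < n)
    (hij : i ≤ j) (hj : j < n) (hcond : ¬(i = k ∧ l ≤ j))
    (g : QRep.Hom (Eij K n i j) (Eij K n k l)) :
    g.φ (⟨k, by omega⟩ : Fin n) = 0 := by
  by_cases hks : i ≤ k ∧ k ≤ j
  · by_cases hik : i = k
    · have hjl : j < l := by
        by_contra hc
        exact hcond ⟨hik, by omega⟩
      have aux : ∀ d p (_hpj : j = p + d) (_hkp : k ≤ p), g.φ (⟨p, by omega⟩ : Fin n) = 0 := by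
        intro d
        induction d with
        | zero =>
          intro p hpj hkp
          have hp : p < n - 1 := by omega
          apply stmt8_step p hp hkp (by omega)
          have hbot : ESub K n i j (ATgt n (⟨p, hp⟩ : Fin (n - 1))) = ⊥ :=
            ESub_bot (show ¬(i ≤ p + 1 ∧ p + 1 ≤ j) by omega)
          have h0 : (Eij K n i j).f ⟨p, hp⟩ = 0 := by
            show (toSub (ESub K n i j (ATgt n ⟨p, hp⟩))).comp _ = 0
            rw [toSub_eq_zero (by rw [hbot]; exact bot_ne_top'), LinearMap.zero_comp]
          rw [g.comm ⟨p, hp⟩, h0, LinearMap.comp_zero]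
        | succ d ih =>
          intro p hpj hkp
          have hp : p < n - 1 := by omega
          apply stmt8_step p hp hkp (by omega)
          have hnext : g.φ (⟨p + 1, by omega⟩ : Fin n) = 0 := ih (p + 1) (by omega) (by omega)
          rw [g.comm ⟨p, hp⟩]
          have h0 : g.φ (ATgt n ⟨p, hp⟩) = 0 := hnext
          rw [h0, LinearMap.zero_comp]
      exact aux (j - k) k (by omega) le_rfl
    · -- i < k ≤ j
      have hikk : i < k := by omega
      obtain ⟨m, rfl⟩ : ∃ m, k = m + 1 := ⟨k - 1, by omega⟩
      have hm : m < n - 1 := by omega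
      have hSm : ESub K n i j (ASrc n (⟨m, hm⟩ : Fin (n - 1))) = ⊤ :=
        ESub_top (show i ≤ m by omega) (show m ≤ j by omega)
      have hSm1 : ESub K n i j (ATgt n (⟨m, hm⟩ : Fin (n - 1))) = ⊤ :=
        ESub_top (show i ≤ m + 1 by omega) (show m + 1 ≤ j by omega)
      have hzm : g.φ (ASrc n (⟨m, hm⟩ : Fin (n - 1))) = 0 := by
        apply LinearMap.ext
        intro y
        exact sub_eq_zero_of_bot (ESub_bot (show ¬(m + 1 ≤ m ∧ m ≤ l) by omega)) _
      have hcomp : (g.φ (ATgt n (⟨m, hm⟩ : Fin (n - 1)))).comp ((Eij K n i j).f ⟨m, hm⟩)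
          = 0 := by
        rw [← g.comm ⟨m, hm⟩, hzm, LinearMap.comp_zero]
      apply LinearMap.ext
      intro x
      obtain ⟨y, hy⟩ := Eij_f_surj (⟨m, hm⟩ : Fin (n - 1)) hSm hSm1 x
      show g.φ (ATgt n ⟨m, hm⟩) x = 0
      rw [← hy]
      exact LinearMap.ext_iff.mp hcomp y
  · -- k is outside [i,j] : domain is ⊥
    apply LinearMap.ext
    intro x
    have hx : x = 0 := sub_eq_zero_of_bot (ESub_bot hks) x
    rw [hx, map_zero, map_zero]

/-- If no summand satisfies the condition, the component of any morphism at vertex `k`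
vanishes. -/
lemma stmt8_zero {n k l : ℕ} (hkl : k ≤ l) (hl : l < n) :
    ∀ L : List (ℕ × ℕ), (∀ pr ∈ L, pr.1 ≤ pr.2 ∧ pr.2 < n) →
    (∀ pr ∈ L, ¬(pr.1 = k ∧ l ≤ pr.2)) →
    ∀ f : QRep.Hom (intervalSum K n L) (Eij K n k l),
    f.φ (⟨k, by omega⟩ : Fin n) = 0 := by
  intro L
  induction L with
  | nil =>
    intro _ _ f
    apply LinearMap.ext
    intro x
    have hx : x = 0 := Subsingleton.elim (α := PUnit) x 0
    rw [hx, map_zero, map_zero]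
  | cons pr L' ih =>
    intro hL hcond f
    have hg : (f.comp' (QRep.inlHom (Eij K n pr.1 pr.2) (intervalSum K n L'))).φ
        (⟨k, by omega⟩ : Fin n) = 0 :=
      stmt8_key hkl hl (hL pr (by simp)).1 (hL pr (by simp)).2 (hcond pr (by simp)) _
    have hh : (f.comp' (QRep.inrHom (Eij K n pr.1 pr.2) (intervalSum K n L'))).φ
        (⟨k, by omega⟩ : Fin n) = 0 :=
      ih (fun q hq => hL q (by simp [hq])) (fun q hq => hcond q (by simp [hq])) _
    apply LinearMap.ext
    intro x
    obtain ⟨a, b⟩ := x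
    have h1 : f.φ (⟨k, by omega⟩ : Fin n) (a, 0) = 0 := LinearMap.ext_iff.mp hg a
    have h2 : f.φ (⟨k, by omega⟩ : Fin n) (0, b) = 0 := LinearMap.ext_iff.mp hh b
    have hab : (a, b) = (a, (0 : (intervalSum K n L').V _))
        + ((0 : (Eij K n pr.1 pr.2).V _), b) := by
      exact Prod.ext (add_zero a).symm (zero_add b).symm
    show f.φ (⟨k, by omega⟩ : Fin n) (a, b) = 0
    rw [hab]
    exact (map_add (f.φ _) (a, 0) (0, b)).trans ((congrArg₂ (· + ·) h1 h2).trans (add_zero 0))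

end AuxStmt8

/-- if a direct sum of interval representations surjects onto `E^{kl}`, then
one of the summands is `E^{kj}` with `j ≥ l`. -/
theorem stmt8 (K : Type) [Field K] (n k l : ℕ) (hkl : k ≤ l) (hl : l < n)
    (L : List (ℕ × ℕ)) (hL : ∀ pr ∈ L, pr.1 ≤ pr.2 ∧ pr.2 < n)
    (f : QRep.Hom (intervalSum K n L) (Eij K n k l)) (hf : f.Surjective) :
    ∃ pr ∈ L, pr.1 = k ∧ l ≤ pr.2 := by
  by_contra hcon
  push_neg at hcon
  have hzero : f.φ (⟨k, by omega⟩ : Fin n) = 0 :=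
    stmt8_zero hkl hl L hL (fun pr hpr => by
      intro ⟨h1, h2⟩; exact absurd h2 (by simpa using hcon pr hpr h1)) f
  have h1mem : (1 : K) ∈ ESub K n k l (⟨k, by omega⟩ : Fin n) := by
    rw [ESub_top (le_refl k) hkl]; trivial
  obtain ⟨x, hx⟩ := hf (⟨k, by omega⟩ : Fin n) ⟨(1 : K), h1mem⟩
  have hx2 : (0 : ESub K n k l (⟨k, by omega⟩ : Fin n)) = ⟨(1 : K), h1mem⟩ := by
    rw [← hx, hzero]; rfl
  have h01 : (0 : K) = 1 := congrArg Subtype.val hx2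
  exact one_ne_zero h01.symm
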